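/- arXiv:2203.02210 — 3 statements merged into one kernel-verified Lean document; each statement's English description precedes it below -/
import Mathlib

section
/- Consider the symmetric block matrix P = [[mI, -R],[-Rᵀ, mRᵀ(L²)⁺R]] where (·)⁺ denotes the Moore–Penrose pseudoinverse, L is the Laplacian of a connected graph, R has orthonormal columns orthogonal to ker(L), and m > 0. If m > 1/√(min σ(Rᵀ(L²)⁺R)), then P is positive definite. -/
open Matrix
open scoped Pointwise

section Aux

variable {n : Type*} [Fintype n] [DecidableEq n]

/-- Uniqueness-style argument: the MP pseudoinverse of a symmetric matrix commutes with it. -/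
lemma pinv_comm (A X : Matrix n n ℝ) (hAT : Aᵀ = A)
    (hmp1 : A * X * A = A) (hmp3 : (A * X)ᵀ = A * X) (hmp4 : (X * A)ᵀ = X * A) :
    A * X = X * A := by
  have hY1 : A * Xᵀ * A = A := by
    have := congrArg Matrix.transpose hmp1
    simpa [Matrix.transpose_mul, hAT, Matrix.mul_assoc] using this
  have hAXt : A * Xᵀ = X * A := by
    calc A * Xᵀ = Aᵀ * Xᵀ := by rw [hAT]
    _ = (X * A)ᵀ := by rw [Matrix.transpose_mul]
    _ = X * A := hmp4
  have hXtA : Xᵀ * A = A * X := by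
    calc Xᵀ * A = Xᵀ * Aᵀ := by rw [hAT]
    _ = (A * X)ᵀ := by rw [Matrix.transpose_mul]
    _ = A * X := hmp3
  calc A * X = (A * Xᵀ * A) * X := by rw [hY1]
  _ = (A * Xᵀ) * (A * X) := by rw [Matrix.mul_assoc, Matrix.mul_assoc]
  _ = (X * A) * (Xᵀ * A) := by rw [hAXt, ← hXtA]
  _ = X * (A * Xᵀ * A) := by simp only [Matrix.mul_assoc]
  _ = X * A := by rw [hY1]

/-- The MP pseudoinverse of a symmetric matrix is symmetric. -/
lemma pinv_symm (A X : Matrix n n ℝ) (hAT : Aᵀ = A)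
    (hmp1 : A * X * A = A) (hmp2 : X * A * X = X)
    (hmp3 : (A * X)ᵀ = A * X) (hmp4 : (X * A)ᵀ = X * A) :
    Xᵀ = X := by
  have hComm := pinv_comm A X hAT hmp1 hmp3 hmp4
  have hAXt : A * Xᵀ = X * A := by
    calc A * Xᵀ = Aᵀ * Xᵀ := by rw [hAT]
    _ = (X * A)ᵀ := by rw [Matrix.transpose_mul]
    _ = X * A := hmp4
  have hX2 : X * X * A = X := by
    calc X * X * A = X * (X * A) := by rw [Matrix.mul_assoc]
    _ = X * (A * X) := by rw [hComm]
    _ = X * A * X := by rw [Matrix.mul_assoc]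
    _ = X := hmp2
  calc Xᵀ = (X * (A * X))ᵀ := by rw [← Matrix.mul_assoc, hmp2]
  _ = (A * X)ᵀ * Xᵀ := by rw [Matrix.transpose_mul]
  _ = (A * X) * Xᵀ := by rw [hmp3]
  _ = (X * A) * Xᵀ := by rw [hComm]
  _ = X * (A * Xᵀ) := by rw [Matrix.mul_assoc]
  _ = X * (X * A) := by rw [hAXt]
  _ = X * X * A := by rw [Matrix.mul_assoc]
  _ = X := hX2

end Aux

/-- With `P = [[m I, -R], [-Rᵀ, m Rᵀ (L²)⁺ R]]`, where `(L²)⁺` is the Moore–Penrose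
pseudoinverse of `L²`, if `m > 1/√(min σ(Rᵀ (L²)⁺ R))` then `P` is positive definite. -/
theorem P_posdef
    (N d : ℕ) (hN : 0 < N)
    (ones : Matrix (Fin N × Fin d) (Fin d) ℝ)
    (hones : ones = Matrix.of fun p j => if p.2 = j then (1 : ℝ) else 0)
    (L : Matrix (Fin N × Fin d) (Fin N × Fin d) ℝ)
    (hL : L.PosSemidef)
    (hker : ∀ v : Fin N × Fin d → ℝ,
      L.mulVec v = 0 ↔ ∃ w : Fin d → ℝ, v = ones.mulVec w)
    (R : Matrix (Fin N × Fin d) (Fin (N - 1) × Fin d) ℝ)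
    (hRR : Rᵀ * R = 1) (hRones : Rᵀ * ones = 0)
    -- `L2p` is the Moore–Penrose pseudoinverse of `L²`:
    (L2p : Matrix (Fin N × Fin d) (Fin N × Fin d) ℝ)
    (hmp1 : L * L * L2p * (L * L) = L * L)
    (hmp2 : L2p * (L * L) * L2p = L2p)
    (hmp3 : (L * L * L2p)ᵀ = L * L * L2p)
    (hmp4 : (L2p * (L * L))ᵀ = L2p * (L * L))
    (m : ℝ) (hm0 : 0 < m)
    (hm : 1 / Real.sqrt (sInf (spectrum ℝ (Rᵀ * L2p * R))) < m) :
    (Matrix.fromBlocks (m • (1 : Matrix (Fin N × Fin d) (Fin N × Fin d) ℝ)) (-R)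
      (-Rᵀ) (m • (Rᵀ * L2p * R))).PosDef := by
  set A := L * L with hA
  set X := L2p with hXdef
  have hLT : Lᵀ = L := by
    rw [← Matrix.conjTranspose_eq_transpose_of_trivial]; exact hL.isHermitian
  have hAT : Aᵀ = A := by rw [hA, Matrix.transpose_mul, hLT]
  have hXsym : Xᵀ = X := pinv_symm A X hAT hmp1 hmp2 hmp3 hmp4
  have hComm : A * X = X * A := pinv_comm A X hAT hmp1 hmp3 hmp4
  set S := Rᵀ * X * R with hS
  have hSfact : S = (L * X * R)ᵀ * (L * X * R) := by
    conv_lhs => rw [hS, ← hmp2]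
    simp only [hA, Matrix.transpose_mul, hXsym, hLT, Matrix.mul_assoc]
  have hSfactH : S = (L * X * R)ᴴ * (L * X * R) := by
    rw [Matrix.conjTranspose_eq_transpose_of_trivial]; exact hSfact
  have hS_psd : S.PosSemidef := hSfactH ▸ posSemidef_conjTranspose_mul_self _
  have key : ∀ z, z ⬝ᵥ (S *ᵥ z) = ((L * X * R) *ᵥ z) ⬝ᵥ ((L * X * R) *ᵥ z) := by
    intro z
    conv_lhs => rw [hSfact]
    rw [← Matrix.mulVec_mulVec, Matrix.dotProduct_mulVec, Matrix.vecMul_transpose]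
  have hRinj : ∀ y : Fin (N - 1) × Fin d → ℝ, R *ᵥ y = 0 → y = 0 := by
    intro y h
    have h2 : (Rᵀ * R) *ᵥ y = 0 := by
      rw [← Matrix.mulVec_mulVec, h, Matrix.mulVec_zero]
    rwa [hRR, Matrix.one_mulVec] at h2
  have hproj : ∀ y : Fin (N - 1) × Fin d → ℝ,
      (X * A) *ᵥ (R *ᵥ y) = R *ᵥ y := by
    intro y
    obtain ⟨w, hw⟩ : ∃ w, w = R *ᵥ y := ⟨_, rfl⟩
    rw [← hw]
    obtain ⟨u, hu⟩ : ∃ u, u = w - (X * A) *ᵥ w := ⟨_, rfl⟩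
    have hAXw : A *ᵥ ((X * A) *ᵥ w) = A *ᵥ w := by
      rw [Matrix.mulVec_mulVec, ← Matrix.mul_assoc, hmp1]
    have hAu : A *ᵥ u = 0 := by
      rw [hu, Matrix.mulVec_sub, hAXw, sub_self]
    have hLu : L *ᵥ u = 0 := by
      have h2 : u ⬝ᵥ (A *ᵥ u) = (L *ᵥ u) ⬝ᵥ (L *ᵥ u) := by
        rw [hA, ← Matrix.mulVec_mulVec, Matrix.dotProduct_mulVec,
          show u ᵥ* L = L *ᵥ u from by conv_lhs => rw [← hLT, Matrix.vecMul_transpose]]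
      rw [hAu, dotProduct_zero] at h2
      exact dotProduct_self_eq_zero.mp h2.symm
    obtain ⟨cv, hcv⟩ := (hker u).mp hLu
    have h1 : u ⬝ᵥ w = 0 := by
      rw [hcv, dotProduct_comm, Matrix.dotProduct_mulVec,
        show w ᵥ* ones = onesᵀ *ᵥ w from by
          conv_lhs => rw [show ones = onesᵀᵀ from (Matrix.transpose_transpose ones).symm,
            Matrix.vecMul_transpose],
        hw, Matrix.mulVec_mulVec,
        show onesᵀ * R = 0 from by
          have h3 := congrArg Matrix.transpose hRones
          simpa [Matrix.transpose_mul] using h3]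
      simp
    have h2 : u ⬝ᵥ ((X * A) *ᵥ w) = 0 := by
      rw [Matrix.dotProduct_mulVec,
        show u ᵥ* (X * A) = (X * A) *ᵥ u from by
          conv_lhs => rw [← hmp4, Matrix.vecMul_transpose],
        ← Matrix.mulVec_mulVec, hAu, Matrix.mulVec_zero, zero_dotProduct]
    have hu0 : u = 0 := by
      apply dotProduct_self_eq_zero.mp
      calc u ⬝ᵥ u = u ⬝ᵥ (w - (X * A) *ᵥ w) := by rw [← hu]
      _ = u ⬝ᵥ w - u ⬝ᵥ ((X * A) *ᵥ w) := dotProduct_sub u _ _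
      _ = 0 := by rw [h1, h2, sub_zero]
    exact (sub_eq_zero.mp (hu.symm.trans hu0)).symm
  have hS_pd : S.PosDef := by
    refine Matrix.PosDef.of_dotProduct_mulVec_pos hS_psd.1 fun y hy => ?_
    have hge := hS_psd.dotProduct_mulVec_nonneg y
    rw [star_trivial] at hge ⊢
    rcases eq_or_lt_of_le hge with h | h
    · exfalso; apply hy
      rw [key] at h
      have hBy : (L * X * R) *ᵥ y = 0 := dotProduct_self_eq_zero.mp h.symm
      have h6 : L *ᵥ ((L * X * R) *ᵥ y) = 0 := by rw [hBy, Matrix.mulVec_zero]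
      rw [Matrix.mulVec_mulVec,
        show L * (L * X * R) = (X * A) * R from by
          rw [← hComm, hA]; simp only [Matrix.mul_assoc],
        ← Matrix.mulVec_mulVec, hproj y] at h6
      exact hRinj y h6
    · exact h
  set c := sInf (spectrum ℝ S) with hc
  have hspec : spectrum ℝ S = Set.range hS_psd.1.eigenvalues :=
    hS_psd.1.spectrum_real_eq_range_eigenvalues
  have hST : Sᵀ = S := by
    rw [← Matrix.conjTranspose_eq_transpose_of_trivial]; exact hS_psd.1
  have hTherm : (S - c • 1).IsHermitian := by
    simp [Matrix.IsHermitian, Matrix.conjTranspose_eq_transpose_of_trivial,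
      Matrix.transpose_sub, Matrix.transpose_smul, hST]
  have hT_psd : (S - c • 1).PosSemidef := by
    apply hTherm.posSemidef_iff_eigenvalues_nonneg.mpr
    intro i
    have hmem := hTherm.eigenvalues_mem_spectrum_real i
    have hspecT : spectrum ℝ S - {c} = spectrum ℝ (S - c • 1) := by
      have h7 := spectrum.sub_singleton_eq (R := ℝ) S c
      rwa [Algebra.algebraMap_eq_smul_one] at h7
    rw [← hspecT] at hmem
    obtain ⟨a, ha, b, hb, hab⟩ := Set.mem_sub.mp hmem
    rw [Set.mem_singleton_iff] at hb
    have hbdd : BddBelow (spectrum ℝ S) := (Matrix.finite_real_spectrum (A := S)).bddBelow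
    have hca : c ≤ a := csInf_le hbdd ha
    rw [← hab, hb, Pi.zero_apply]
    linarith
  have hquad : ∀ z, c * (z ⬝ᵥ z) ≤ z ⬝ᵥ (S *ᵥ z) := by
    intro z
    have h := hT_psd.dotProduct_mulVec_nonneg z
    rw [star_trivial] at h
    rw [Matrix.sub_mulVec, dotProduct_sub, Matrix.smul_mulVec,
      Matrix.one_mulVec, dotProduct_smul, smul_eq_mul] at h
    linarith
  refine Matrix.PosDef.of_dotProduct_mulVec_pos ?_ ?_
  · show _ᴴ = _
    rw [Matrix.fromBlocks_conjTranspose]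
    simp [Matrix.conjTranspose_eq_transpose_of_trivial, Matrix.transpose_smul,
      Matrix.transpose_neg, Matrix.transpose_one, Matrix.transpose_transpose, hST]
  · intro v hv
    have hv' : v = Sum.elim (fun i => v (Sum.inl i)) (fun j => v (Sum.inr j)) := by
      funext p; cases p <;> rfl
    set x := fun i => v (Sum.inl i) with hx
    set y := fun j => v (Sum.inr j) with hy
    rw [star_trivial, hv', Matrix.fromBlocks_mulVec, sumElim_dotProduct_sumElim]
    have hyx : y ⬝ᵥ (Rᵀ *ᵥ x) = x ⬝ᵥ (R *ᵥ y) := by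
      rw [Matrix.dotProduct_mulVec, Matrix.vecMul_transpose, dotProduct_comm]
    have hww : (R *ᵥ y) ⬝ᵥ (R *ᵥ y) = y ⬝ᵥ y := by
      calc (R *ᵥ y) ⬝ᵥ (R *ᵥ y) = (y ᵥ* Rᵀ) ⬝ᵥ (R *ᵥ y) := by rw [Matrix.vecMul_transpose]
      _ = y ⬝ᵥ (Rᵀ *ᵥ (R *ᵥ y)) := (Matrix.dotProduct_mulVec y Rᵀ _).symm
      _ = y ⬝ᵥ ((Rᵀ * R) *ᵥ y) := by rw [Matrix.mulVec_mulVec]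
      _ = y ⬝ᵥ y := by rw [hRR, Matrix.one_mulVec]
    simp only [Matrix.neg_mulVec, dotProduct_add, dotProduct_neg,
      Matrix.smul_mulVec, Matrix.one_mulVec, dotProduct_smul, smul_eq_mul,
      Sum.elim_comp_inl, Sum.elim_comp_inr, hyx]
    have h1 : 0 ≤ (m • x - R *ᵥ y) ⬝ᵥ (m • x - R *ᵥ y) :=
      Finset.sum_nonneg fun i _ => mul_self_nonneg _
    simp only [dotProduct_sub, sub_dotProduct, smul_dotProduct,
      dotProduct_smul, smul_eq_mul] at h1
    rw [dotProduct_comm (R *ᵥ y) x, hww] at h1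
    by_cases hy0 : y = 0
    · have hx0 : x ≠ 0 := by
        intro h
        apply hv
        rw [hv', h, hy0]
        funext p; cases p <;> rfl
      have hxnn : 0 ≤ x ⬝ᵥ x := Finset.sum_nonneg fun i _ => mul_self_nonneg _
      have hxx : 0 < x ⬝ᵥ x :=
        lt_of_le_of_ne hxnn fun h => hx0 (dotProduct_self_eq_zero.mp h.symm)
      rw [hy0]
      simp only [Matrix.mulVec_zero, dotProduct_zero, zero_dotProduct]
      nlinarith [mul_pos hm0 hxx]
    · have hynn : 0 ≤ y ⬝ᵥ y := Finset.sum_nonneg fun i _ => mul_self_nonneg _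
      have he : 0 < y ⬝ᵥ y :=
        lt_of_le_of_ne hynn fun h => hy0 (dotProduct_self_eq_zero.mp h.symm)
      obtain ⟨j0, -⟩ := Function.ne_iff.mp hy0
      haveI : Nonempty (Fin (N - 1) × Fin d) := ⟨j0⟩
      have hcmem : c ∈ spectrum ℝ S := by
        rw [hc]
        exact Set.Nonempty.csInf_mem
          (by rw [hspec]; exact Set.range_nonempty _) (Matrix.finite_real_spectrum (A := S))
      have hcpos : 0 < c := by
        rw [hspec] at hcmem
        obtain ⟨i, hi⟩ := hcmem
        rw [← hi]
        exact hS_pd.eigenvalues_pos i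
      have hsq : Real.sqrt c > 0 := Real.sqrt_pos.mpr hcpos
      have hm1 : 1 < m * Real.sqrt c := by
        rw [div_lt_iff₀ hsq] at hm
        linarith
      have hmc : 1 < m * m * c := by
        have h3 : Real.sqrt c * Real.sqrt c = c := Real.mul_self_sqrt hcpos.le
        calc (1 : ℝ) = 1 * 1 := (one_mul 1).symm
        _ < (m * Real.sqrt c) * (m * Real.sqrt c) :=
            mul_lt_mul'' hm1 hm1 (by norm_num) (by norm_num)
        _ = m * m * c := by rw [mul_mul_mul_comm, h3]
      have h2 : c * (y ⬝ᵥ y) ≤ y ⬝ᵥ (S *ᵥ y) := hquad y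
      have e1 : m * m * (c * (y ⬝ᵥ y)) ≤ m * m * (y ⬝ᵥ (S *ᵥ y)) :=
        mul_le_mul_of_nonneg_left h2 (mul_pos hm0 hm0).le
      have e2 : 1 * (y ⬝ᵥ y) < (m * m * c) * (y ⬝ᵥ y) := mul_lt_mul_of_pos_right hmc he
      by_contra hq
      push_neg at hq
      have e4 := mul_le_mul_of_nonneg_left hq hm0.le
      rw [mul_zero] at e4
      linarith [h1, e1, e2, e4]
end

section
/- Let ζ : [t_k, T) → ℝ^n \ {0} and e : [t_k, T) → ℝ^n be differentiable with ė(t) = -ζ̇(t), and suppose ‖ζ̇(t)‖ ≤ (‖A‖ + β)‖ζ(t)‖ + (1 + β)‖E‖·‖e(t)‖ for all t. Then r(t) := ‖e(t)‖/‖ζ(t)‖ satisfies (whenever e(t) ≠ 0) the differential inequality ṙ(t) ≤ β(1 + r(t)) + c(1 + r(t))², where c := max{‖A‖, (1+β)‖E‖}. -/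
open scoped RealInnerProductSpace

private lemma norm_hasDerivAt {E : Type*} [NormedAddCommGroup E] [InnerProductSpace ℝ E]
    {f : ℝ → E} {f' : E} {t : ℝ} (hf : HasDerivAt f f' t) (h0 : f t ≠ 0) :
    HasDerivAt (fun s => ‖f s‖) (⟪f t, f'⟫ / ‖f t‖) t := by
  have hq : HasDerivAt (fun s => ⟪f s, f s⟫) (⟪f t, f'⟫ + ⟪f', f t⟫) t := hf.inner ℝ hf
  have hqt : ⟪f t, f t⟫ ≠ 0 := by
    simpa [real_inner_self_eq_norm_mul_norm] using
      mul_ne_zero (norm_ne_zero_iff.2 h0) (norm_ne_zero_iff.2 h0)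
  have hsqrt := (Real.hasDerivAt_sqrt hqt).comp t hq
  have heq : (fun s => Real.sqrt ⟪f s, f s⟫) = fun s => ‖f s‖ := by
    funext s
    rw [real_inner_self_eq_norm_mul_norm, Real.sqrt_mul_self (norm_nonneg _)]
  have hval : (1 / (2 * Real.sqrt ⟪f t, f t⟫)) * (⟪f t, f'⟫ + ⟪f', f t⟫)
      = ⟪f t, f'⟫ / ‖f t‖ := by
    rw [real_inner_self_eq_norm_mul_norm, Real.sqrt_mul_self (norm_nonneg _),
      real_inner_comm f' (f t)]
    have h : ‖f t‖ ≠ 0 := norm_ne_zero_iff.2 h0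
    field_simp
    ring
  have hsqrt' : HasDerivAt (fun s => ‖f s‖)
      ((1 / (2 * Real.sqrt ⟪f t, f t⟫)) * (⟪f t, f'⟫ + ⟪f', f t⟫)) t := by
    rw [← heq]; exact hsqrt
  rwa [hval] at hsqrt'

/-- If `ζ` never vanishes, `ė = -ζ̇`, and `‖ζ̇‖ ≤ (‖A‖+β)‖ζ‖ + (1+β)‖E‖‖e‖`, then the
ratio `r = ‖e‖/‖ζ‖` satisfies `ṙ ≤ β(1+r) + c(1+r)²` with `c = max{‖A‖, (1+β)‖E‖}`
wherever `e ≠ 0`. -/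
theorem error_ratio_differential_inequality
    (n : ℕ) (tk T : ℝ)
    (nA nE β : ℝ) (hβ : 0 < β) (hnA : 0 ≤ nA) (hnE : 0 ≤ nE)
    (ζ e : ℝ → EuclideanSpace ℝ (Fin n))
    (ζ' : ℝ → EuclideanSpace ℝ (Fin n))
    (hζ : ∀ t ∈ Set.Ico tk T, HasDerivAt ζ (ζ' t) t)
    (he : ∀ t ∈ Set.Ico tk T, HasDerivAt e (-ζ' t) t)
    (hζne : ∀ t ∈ Set.Ico tk T, ζ t ≠ 0)
    (hbound : ∀ t ∈ Set.Ico tk T,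
      ‖ζ' t‖ ≤ (nA + β) * ‖ζ t‖ + (1 + β) * nE * ‖e t‖) :
    ∀ t ∈ Set.Ico tk T, e t ≠ 0 →
      deriv (fun s => ‖e s‖ / ‖ζ s‖) t ≤
        β * (1 + ‖e t‖ / ‖ζ t‖) +
          max nA ((1 + β) * nE) * (1 + ‖e t‖ / ‖ζ t‖) ^ 2 := by
  intro t ht hene
  set u := ‖e t‖ with hu_def
  set v := ‖ζ t‖ with hv_def
  have hv : 0 < v := norm_pos_iff.2 (hζne t ht)
  have hu : 0 < u := norm_pos_iff.2 hene
  set u' := ⟪e t, -ζ' t⟫ / u with hu'_def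
  set v' := ⟪ζ t, ζ' t⟫ / v with hv'_def
  have hdu : HasDerivAt (fun s => ‖e s‖) u' t := norm_hasDerivAt (he t ht) hene
  have hdv : HasDerivAt (fun s => ‖ζ s‖) v' t := norm_hasDerivAt (hζ t ht) (hζne t ht)
  have hdiv : HasDerivAt (fun s => ‖e s‖ / ‖ζ s‖) ((u' * v - u * v') / v ^ 2) t :=
    hdu.div hdv hv.ne'
  rw [hdiv.deriv]
  set Z := ‖ζ' t‖ with hZ_def
  have hZ0 : 0 ≤ Z := norm_nonneg _
  have hu' : u' ≤ Z := by
    rw [hu'_def, div_le_iff₀ hu]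
    calc ⟪e t, -ζ' t⟫ ≤ ‖e t‖ * ‖-ζ' t‖ := real_inner_le_norm _ _
    _ = Z * u := by rw [norm_neg]; ring
  have hv' : -Z ≤ v' := by
    rw [hv'_def, le_div_iff₀ hv]
    have := real_inner_le_norm (ζ t) (-ζ' t)
    rw [inner_neg_right, norm_neg] at this
    nlinarith
  have hZb : Z ≤ (nA + β) * v + (1 + β) * nE * u := hbound t ht
  set c := max nA ((1 + β) * nE) with hc_def
  have hc1 : nA ≤ c := le_max_left _ _
  have hc2 : (1 + β) * nE ≤ c := le_max_right _ _
  have hnum : u' * v - u * v' ≤ Z * (v + u) := by nlinarith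
  have key : u' * v - u * v' ≤ ((nA + β) * v + (1 + β) * nE * u) * (v + u) := by
    nlinarith
  rw [div_le_iff₀ (by positivity : (0:ℝ) < v ^ 2)]
  have hrhs : (β * (1 + u / v) + c * (1 + u / v) ^ 2) * v ^ 2
      = β * v * (v + u) + c * (v + u) ^ 2 := by
    field_simp
  rw [hrhs]
  nlinarith [mul_le_mul_of_nonneg_right hc1 (by positivity : (0:ℝ) ≤ v * (v + u)),
    mul_le_mul_of_nonneg_right hc2 (by positivity : (0:ℝ) ≤ u * (v + u))]
end

section
/- Let ξᵢ(t) = ξᵢ(0)e^{-νt} with ξᵢ(0) ≠ 0 and ν > 0, and suppose each inter-event interval of an agent satisfies the necessary condition c(t^{k+1} - t^k) ≥ |ξᵢ(0)|e^{-ν t^{k+1}} for a constant c > 0 (any triggering requires the accumulated error c(t^{k+1}-t^k) to exceed the threshold |ξᵢ(t^{k+1})|). Then the sequence of triggering times {t^k} cannot converge to a finite limit t^∞, i.e., Zeno behavior is excluded. -/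
open Filter

/-- Exclusion of Zeno behavior: if each inter-event interval satisfies
`c(t^{k+1} - t^k) ≥ |ξ₀| e^{-ν t^{k+1}}` with `c > 0`, `ν > 0` and `ξ₀ ≠ 0`, then the
triggering times cannot accumulate at a finite time. -/
theorem no_zeno_behavior
    (ν c ξ0 : ℝ) (hν : 0 < ν) (hc : 0 < c) (hξ0 : ξ0 ≠ 0)
    (t : ℕ → ℝ)
    (hcond : ∀ k : ℕ, |ξ0| * Real.exp (-ν * t (k + 1)) ≤ c * (t (k + 1) - t k)) :
    ∀ tinf : ℝ, ¬ Tendsto t atTop (nhds tinf) := by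
  intro tinf ht
  have h1 : Tendsto (fun k => t (k + 1)) atTop (nhds tinf) :=
    ht.comp (tendsto_add_atTop_nat 1)
  have hdiff : Tendsto (fun k => c * (t (k + 1) - t k)) atTop (nhds (c * (tinf - tinf))) :=
    (h1.sub ht).const_mul c
  have hlhs : Tendsto (fun k => |ξ0| * Real.exp (-ν * t (k + 1))) atTop
      (nhds (|ξ0| * Real.exp (-ν * tinf))) :=
    ((Real.continuous_exp.tendsto _).comp (h1.const_mul (-ν))).const_mul _
  have hle : |ξ0| * Real.exp (-ν * tinf) ≤ c * (tinf - tinf) :=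
    le_of_tendsto_of_tendsto' hlhs hdiff hcond
  have : (0:ℝ) < |ξ0| * Real.exp (-ν * tinf) :=
    mul_pos (abs_pos.mpr hξ0) (Real.exp_pos _)
  rw [neg_mul] at this
  simp at hle
  linarith
end
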